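/- Let p be even, v : ℝ^p → ℝ^p continuously differentiable and homogeneous of degree 2, and ω₀ ≠ 0 a steady state (v(ω₀) = 0) which is nondegenerate in the sense that 0 is a root of algebraic multiplicity exactly 1 of the characteristic polynomial of the Jacobian Dv(ω₀). Let s(ω) denote the number of roots (with multiplicity) of the characteristic polynomial of Dv(ω) with strictly negative real part, and define j(ω) = (−1)^{s(ω)}. Then the index of the straight line of steady motions through ω₀ vanishes: j(ω₀) + j(−ω₀) = 0. -/

import Mathlib

/-- The Jacobian matrix of a map `v : ℝᵖ → ℝᵖ` at a point `ω`. -/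
noncomputable def jacobianMatrix {p : ℕ} (v : (Fin p → ℝ) → (Fin p → ℝ))
    (ω : Fin p → ℝ) : Matrix (Fin p) (Fin p) ℝ :=
  Matrix.of fun i j => fderiv ℝ v ω (Pi.single j 1) i

open Classical in
/-- `s(ω)`: the number of roots (with multiplicity) of the characteristic polynomial
of the Jacobian `Dv(ω)` over `ℂ` with strictly negative real part. -/
noncomputable def stableCount {p : ℕ} (v : (Fin p → ℝ) → (Fin p → ℝ))
    (ω : Fin p → ℝ) : ℕ :=
  Multiset.card (((jacobianMatrix v ω).charpoly.aroots ℂ).filter fun z => z.re < 0)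

open Polynomial Matrix in
lemma eval_charpoly'' {p : ℕ} (M : Matrix (Fin p) (Fin p) ℂ) (r : ℂ) :
    M.charpoly.eval r = (Matrix.scalar (Fin p) r - M).det := by
  rw [Matrix.charpoly, eval_det, Matrix.matPolyEquiv_charmatrix]
  simp

open Polynomial Matrix in
lemma roots_charpoly_neg' {p : ℕ} (B : Matrix (Fin p) (Fin p) ℂ) :
    (-B).charpoly.roots = B.charpoly.roots.map (fun z => -z) := by
  have hm := B.charpoly_monic
  have hs : B.charpoly.Splits := IsAlgClosed.splits _
  have hcard : Multiset.card B.charpoly.roots = p := by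
    rw [Polynomial.splits_iff_card_roots.mp hs, Matrix.charpoly_natDegree_eq_dim,
      Fintype.card_fin]
  have heq : (-B).charpoly
      = ((B.charpoly.roots.map (fun z => -z)).map (fun a => X - C a)).prod := by
    apply Polynomial.funext; intro x
    rw [eval_charpoly'', sub_neg_eq_add]
    have h1 : Matrix.scalar (Fin p) x + B = -(Matrix.scalar (Fin p) (-x) - B) := by
      rw [map_neg]; abel
    rw [h1, Matrix.det_neg, Fintype.card_fin, ← eval_charpoly'']
    conv_lhs => rw [Polynomial.Splits.eq_prod_roots_of_monic hs hm]
    rw [Polynomial.eval_multiset_prod, Polynomial.eval_multiset_prod,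
      Multiset.map_map, Multiset.map_map]
    have hL : Multiset.map (Polynomial.eval (-x) ∘ fun a => X - C a) B.charpoly.roots
        = Multiset.map Neg.neg (Multiset.map (fun a => x - (-a)) B.charpoly.roots) := by
      rw [Multiset.map_map]; apply Multiset.map_congr rfl; intro a _; simp; ring
    rw [hL, Multiset.prod_map_neg, Multiset.card_map, hcard, ← mul_assoc,
      ← mul_pow, neg_mul_neg, one_mul, one_pow, one_mul]
    rw [Multiset.map_map]; apply congrArg
    apply Multiset.map_congr rfl; intro a _; simp
  rw [heq, Polynomial.roots_multiset_prod_X_sub_C]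

/-- For even `p`, a `C¹` map `v : ℝᵖ → ℝᵖ` homogeneous of degree 2,
and a nonzero nondegenerate steady state `ω₀` (i.e. `0` is a root of algebraic
multiplicity exactly one of the characteristic polynomial of `Dv(ω₀)`), the index of
the straight line of steady motions through `ω₀` vanishes:
`j(ω₀) + j(−ω₀) = 0`, where `j(ω) = (−1)^{s(ω)}`. -/
theorem index_of_slsm_vanishes_for_even_dimension
    (p : ℕ) (hp : Even p)
    (v : (Fin p → ℝ) → (Fin p → ℝ))
    (hcd : ContDiff ℝ 1 v)
    (hhom : ∀ (c : ℝ) (ω : Fin p → ℝ), v (c • ω) = c ^ 2 • v ω)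
    (ω₀ : Fin p → ℝ) (hω₀ : ω₀ ≠ 0) (hss : v ω₀ = 0)
    (hnd : Multiset.count 0 ((jacobianMatrix v ω₀).charpoly.aroots ℂ) = 1) :
    ((-1 : ℤ)) ^ stableCount v ω₀ + ((-1 : ℤ)) ^ stableCount v (-ω₀) = 0 := by
  classical
  -- v is even
  have hveq : (fun x => v (-x)) = v := by
    funext x
    have := hhom (-1) x
    simpa [neg_one_smul] using this
  -- Jacobian at -ω₀ is the negative of the Jacobian at ω₀
  have hnegA : jacobianMatrix v (-ω₀) = -(jacobianMatrix v ω₀) := by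
    have hd : Differentiable ℝ v := hcd.differentiable one_ne_zero
    have hneg : HasFDerivAt (fun x : Fin p → ℝ => -x)
        (-(ContinuousLinearMap.id ℝ (Fin p → ℝ))) ω₀ := (hasFDerivAt_id ω₀).neg
    have hcomp : HasFDerivAt (fun x => v (-x))
        ((fderiv ℝ v (-ω₀)).comp (-(ContinuousLinearMap.id ℝ (Fin p → ℝ)))) ω₀ :=
      (hd (-ω₀)).hasFDerivAt.comp ω₀ hneg
    rw [hveq] at hcomp
    have hfd : fderiv ℝ v ω₀
        = (fderiv ℝ v (-ω₀)).comp (-(ContinuousLinearMap.id ℝ (Fin p → ℝ))) :=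
      hcomp.fderiv
    ext i j
    have := congrFun (congrArg (fun L : (Fin p → ℝ) →L[ℝ] (Fin p → ℝ) => L (Pi.single j 1))
      hfd) i
    simp only [ContinuousLinearMap.comp_apply, ContinuousLinearMap.neg_apply,
      ContinuousLinearMap.id_apply, map_neg] at this
    simp only [jacobianMatrix, Matrix.of_apply, Matrix.neg_apply]
    rw [this]
    simp
  -- set up roots multiset over ℂ
  set A := jacobianMatrix v ω₀ with hA
  set R : Multiset ℂ := (A.charpoly.map (algebraMap ℝ ℂ)).roots with hRdef
  have hroots : A.charpoly.aroots ℂ = R := rfl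
  have hsQ : (A.charpoly.map (algebraMap ℝ ℂ)).Splits :=
    IsAlgClosed.splits _
  have hcardR : Multiset.card R = p := by
    rw [hRdef, Polynomial.splits_iff_card_roots.mp hsQ,
      Polynomial.natDegree_map_eq_of_injective (algebraMap ℝ ℂ).injective,
      Matrix.charpoly_natDegree_eq_dim, Fintype.card_fin]
  -- roots of the Jacobian at -ω₀
  have hBneg : (-A).map (algebraMap ℝ ℂ) = -(A.map (algebraMap ℝ ℂ)) := by
    ext i j; simp [Matrix.map_apply]
  have hrootsneg : (jacobianMatrix v (-ω₀)).charpoly.aroots ℂ = R.map (fun z => -z) := by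
    rw [hnegA, Polynomial.aroots_def, ← Matrix.charpoly_map, hBneg, roots_charpoly_neg',
      Matrix.charpoly_map]
  -- conjugation invariance of R
  have hconjR : R.map (starRingEnd ℂ) = R := by
    have hcm : (A.charpoly.map (algebraMap ℝ ℂ)).map (starRingEnd ℂ)
        = A.charpoly.map (algebraMap ℝ ℂ) := by
      rw [Polynomial.map_map]
      congr 1
      exact RingHom.ext fun r => by simp [Complex.conj_ofReal]
    have := Polynomial.Splits.roots_map hsQ (starRingEnd ℂ)
    rw [hcm] at this
    exact this.symm
  -- a helper: cardinality of a filter after mapping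
  have key : ∀ (f : ℂ → ℂ) (S : Multiset ℂ) (pr : ℂ → Prop) (_ : DecidablePred pr),
      Multiset.card ((S.map f).filter pr) = Multiset.card (S.filter fun z => pr (f z)) := by
    intro f S pr _
    rw [Multiset.filter_map, Multiset.card_map]
    rfl
  -- splitting lemma
  have split : ∀ (S : Multiset ℂ) (pr q : ℂ → Prop) (_ : DecidablePred pr)
      (_ : DecidablePred q),
      Multiset.card (S.filter pr) = Multiset.card (S.filter fun z => pr z ∧ q z)
        + Multiset.card (S.filter fun z => pr z ∧ ¬ q z) := by
    intro S pr q _ _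
    conv_lhs => rw [← Multiset.filter_add_not q (S.filter pr)]
    rw [Multiset.card_add, Multiset.filter_filter, Multiset.filter_filter]
    congr 1 <;> (congr 1; apply Multiset.filter_congr; intro z _; exact and_comm)
  set n₁ := Multiset.card (R.filter fun z => z.re < 0) with hn₁
  set n₂ := Multiset.card (R.filter fun z => z.re = 0) with hn₂
  set n₃ := Multiset.card (R.filter fun z => 0 < z.re) with hn₃
  have htot : n₁ + n₂ + n₃ = p := by
    have h1 := split R (fun _ => True) (fun z => z.re < 0) inferInstance inferInstance
    have h2 := split R (fun z : ℂ => ¬ z.re < 0) (fun z => z.re = 0)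
      inferInstance inferInstance
    beta_reduce at h1 h2
    have h0 : Multiset.card (R.filter fun _ : ℂ => True) = p := by
      rw [Multiset.filter_eq_self.mpr (fun _ _ => trivial), hcardR]
    have e1 : Multiset.card (R.filter fun z : ℂ => True ∧ z.re < 0) = n₁ := by
      rw [hn₁]; congr 1; apply Multiset.filter_congr; intro z _
      exact ⟨fun h => h.2, fun h => ⟨trivial, h⟩⟩
    have e2 : Multiset.card (R.filter fun z : ℂ => True ∧ ¬ z.re < 0)
        = Multiset.card (R.filter fun z : ℂ => ¬ z.re < 0) := by
      congr 1; apply Multiset.filter_congr; intro z _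
      exact ⟨fun h => h.2, fun h => ⟨trivial, h⟩⟩
    have e3 : Multiset.card (R.filter fun z : ℂ => ¬ z.re < 0 ∧ z.re = 0) = n₂ := by
      rw [hn₂]; congr 1; apply Multiset.filter_congr; intro z _
      exact ⟨fun h => h.2, fun h => ⟨by rw [h]; simp, h⟩⟩
    have e4 : Multiset.card (R.filter fun z : ℂ => ¬ z.re < 0 ∧ ¬ z.re = 0) = n₃ := by
      rw [hn₃]; congr 1; apply Multiset.filter_congr; intro z _
      constructor
      · intro h; rcases lt_trichotomy z.re 0 with h'|h'|h'
        · exact absurd h' h.1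
        · exact absurd h' h.2
        · exact h'
      · intro h; exact ⟨not_lt.mpr h.le, ne_of_gt h⟩
    omega
  -- decompose n₂ by imaginary part
  set mP := Multiset.card (R.filter fun z : ℂ => z.re = 0 ∧ 0 < z.im) with hmP
  set mM := Multiset.card (R.filter fun z : ℂ => z.re = 0 ∧ z.im < 0) with hmM
  set mZ := Multiset.card (R.filter fun z : ℂ => z.re = 0 ∧ z.im = 0) with hmZ
  have hn₂split : n₂ = mZ + mP + mM := by
    have h1 := split R (fun z => z.re = 0) (fun z => z.im = 0) inferInstance inferInstance
    have h2 := split R (fun z : ℂ => z.re = 0 ∧ ¬ z.im = 0) (fun z => 0 < z.im)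
      inferInstance inferInstance
    beta_reduce at h1 h2
    have e1 : Multiset.card (R.filter fun z : ℂ => (z.re = 0 ∧ ¬ z.im = 0) ∧ 0 < z.im)
        = mP := by
      rw [hmP]; congr 1; apply Multiset.filter_congr; intro z _
      exact ⟨fun h => ⟨h.1.1, h.2⟩, fun h => ⟨⟨h.1, h.2.ne'⟩, h.2⟩⟩
    have e2 : Multiset.card (R.filter fun z : ℂ => (z.re = 0 ∧ ¬ z.im = 0) ∧ ¬ 0 < z.im)
        = mM := by
      rw [hmM]; congr 1; apply Multiset.filter_congr; intro z _
      constructor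
      · exact fun h => ⟨h.1.1, lt_of_le_of_ne (not_lt.mp h.2) h.1.2⟩
      · exact fun h => ⟨⟨h.1, ne_of_lt h.2⟩, not_lt.mpr h.2.le⟩
    omega
  have hmZ1 : mZ = 1 := by
    rw [hroots] at hnd
    rw [Multiset.count_eq_card_filter_eq] at hnd
    rw [hmZ, ← hnd]
    congr 1; apply Multiset.filter_congr; intro z _
    rw [Complex.ext_iff]
    simp [eq_comm]
  have hmPM : mM = mP := by
    rw [hmM]
    conv_lhs => rw [← hconjR]
    rw [key _ _ _ inferInstance, hmP]
    congr 1; apply Multiset.filter_congr; intro z _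
    simp only [Complex.conj_re, Complex.conj_im, neg_lt_zero]
  -- identify stableCounts
  have hs1 : stableCount v ω₀ = n₁ := by
    simp only [stableCount]
    rfl
  have hs3 : stableCount v (-ω₀) = n₃ := by
    simp only [stableCount]
    rw [hrootsneg, key _ _ _ inferInstance, hn₃]
    congr 1; apply Multiset.filter_congr; intro z _
    simp only [Complex.neg_re, neg_lt_zero]
  obtain ⟨k, hk⟩ := hp
  have hodd : Odd (n₁ + n₃) := ⟨k - mP - 1, by omega⟩
  rw [hs1, hs3]
  rcases Nat.even_or_odd n₁ with h|h
  · have h3 : Odd n₃ := by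
      obtain ⟨a, ha⟩ := h; obtain ⟨b, hb⟩ := hodd; exact ⟨b - a, by omega⟩
    rw [h.neg_one_pow, h3.neg_one_pow]; ring
  · have h3 : Even n₃ := by
      obtain ⟨a, ha⟩ := h; obtain ⟨b, hb⟩ := hodd; exact ⟨b - a, by omega⟩
    rw [h.neg_one_pow, h3.neg_one_pow]; ring
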